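/- arXiv:1209.3841 — 2 statements merged into one kernel-verified Lean document; each statement's English description precedes it below -/
import Mathlib

section
/- There exists a constant C > 0 such that for all z ∈ C^2 and all nonzero ξ_1, ξ_2 ∈ R^2, |Π(ξ_1) Π(-ξ_2) z| ≤ C |z| ∠(ξ_1, ξ_2), where ∠(ξ_1,ξ_2) ∈ [0,π] denotes the angle between ξ_1 and ξ_2 and Π(ξ) := (1/2)(I + (ξ_j α^j)/|ξ|). -/
open Matrix

noncomputable def sigma1 : Matrix (Fin 2) (Fin 2) ℂ := !![0, 1; 1, 0]
noncomputable def sigma2 : Matrix (Fin 2) (Fin 2) ℂ := !![0, -Complex.I; Complex.I, 0]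

noncomputable def PiMat (ξ : EuclideanSpace ℝ (Fin 2)) : Matrix (Fin 2) (Fin 2) ℂ :=
  (1 / 2 : ℂ) • ((1 : Matrix (Fin 2) (Fin 2) ℂ) +
    ((‖ξ‖ : ℂ))⁻¹ • (((ξ 0 : ℝ) : ℂ) • sigma1 + ((ξ 1 : ℝ) : ℂ) • sigma2))

lemma real_sqrt_bound (d t p q P Q : ℝ) (hd0 : 0 ≤ d) (ht : 0 ≤ t) (hdt : d ≤ t)
    (hP0 : 0 ≤ P) (hQ0 : 0 ≤ Q) (hp0 : 0 ≤ p) (hq0 : 0 ≤ q)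
    (hP : P ≤ d/4*(p+q)) (hQ : Q ≤ d/4*(p+q)) :
    Real.sqrt (P^2 + Q^2) ≤ Real.sqrt (p^2 + q^2) * t := by
  have key : P^2 + Q^2 ≤ t^2 * (p^2 + q^2) := by
    nlinarith [sq_nonneg (p-q), sq_nonneg (p+q), mul_le_mul hP hP hP0 (by positivity),
      mul_le_mul hQ hQ hQ0 (by positivity), mul_le_mul hdt hdt hd0 ht, sq_nonneg t]
  calc Real.sqrt (P^2 + Q^2) ≤ Real.sqrt (t^2 * (p^2+q^2)) := Real.sqrt_le_sqrt key
    _ = Real.sqrt (p^2+q^2) * t := by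
        rw [Real.sqrt_mul (sq_nonneg t), Real.sqrt_sq ht, mul_comm]

open Complex in
lemma scalar_bound (a₀ a₁ b₀ b₁ t : ℝ) (v₀ v₁ w₀ w₁ : ℂ)
    (ha : a₀^2 + a₁^2 = 1) (hb : b₀^2 + b₁^2 = 1) (ht : 0 ≤ t)
    (hc : 2 - 2*(a₀*b₀ + a₁*b₁) ≤ t^2)
    (hw₀ : w₀ = (1 - ((a₀:ℂ) - a₁*I)*((b₀:ℂ)+b₁*I))/4*v₀ + (((a₀:ℂ) - a₁*I) - ((b₀:ℂ) - b₁*I))/4*v₁)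
    (hw₁ : w₁ = (((a₀:ℂ)+a₁*I) - ((b₀:ℂ)+b₁*I))/4*v₀ + (1 - ((a₀:ℂ)+a₁*I)*((b₀:ℂ)-b₁*I))/4*v₁) :
    Real.sqrt (norm w₀^2 + norm w₁^2)
      ≤ Real.sqrt (norm v₀^2 + norm v₁^2) * t := by
  have hcle : 2 - 2*(a₀*b₀ + a₁*b₁) ≥ 0 := by nlinarith [sq_nonneg (a₀-b₀), sq_nonneg (a₁-b₁)]
  set c : ℝ := a₀*b₀ + a₁*b₁ with hcdef
  set d : ℝ := Real.sqrt (2 - 2*c) with hddef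
  have hd0 : 0 ≤ d := Real.sqrt_nonneg _
  have hd2 : d^2 = 2 - 2*c := Real.sq_sqrt hcle
  have hdt : d ≤ t := by nlinarith [hd2, hc]
  have e1 : norm (1 - ((a₀:ℂ) - a₁*I)*((b₀:ℂ)+b₁*I)) = d := by
    rw [← Real.sqrt_sq (norm_nonneg _), Complex.sq_norm, hddef]
    congr 1; simp [Complex.normSq_apply]; ring_nf; nlinarith [ha, hb]
  have e2 : norm (((a₀:ℂ) - a₁*I) - ((b₀:ℂ) - b₁*I)) = d := by
    rw [← Real.sqrt_sq (norm_nonneg _), Complex.sq_norm, hddef]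
    congr 1; simp [Complex.normSq_apply]; ring_nf; nlinarith [ha, hb]
  have e3 : norm (((a₀:ℂ)+a₁*I) - ((b₀:ℂ)+b₁*I)) = d := by
    rw [← Real.sqrt_sq (norm_nonneg _), Complex.sq_norm, hddef]
    congr 1; simp [Complex.normSq_apply]; ring_nf; nlinarith [ha, hb]
  have e4 : norm (1 - ((a₀:ℂ)+a₁*I)*((b₀:ℂ)-b₁*I)) = d := by
    rw [← Real.sqrt_sq (norm_nonneg _), Complex.sq_norm, hddef]
    congr 1; simp [Complex.normSq_apply]; ring_nf; nlinarith [ha, hb]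
  have bw₀ : norm w₀ ≤ d/4 * (norm v₀ + norm v₁) := by
    rw [hw₀]
    calc norm _ ≤ norm ((1 - ((a₀:ℂ) - a₁*I)*((b₀:ℂ)+b₁*I))/4*v₀)
        + norm ((((a₀:ℂ) - a₁*I) - ((b₀:ℂ) - b₁*I))/4*v₁) := norm_add_le _ _
      _ = d/4 * norm v₀ + d/4 * norm v₁ := by
          rw [norm_mul, norm_mul, norm_div, norm_div, e1, e2]; norm_num
      _ = d/4 * (norm v₀ + norm v₁) := by ring
  have bw₁ : norm w₁ ≤ d/4 * (norm v₀ + norm v₁) := by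
    rw [hw₁]
    calc norm _ ≤ norm ((((a₀:ℂ)+a₁*I) - ((b₀:ℂ)+b₁*I))/4*v₀)
        + norm ((1 - ((a₀:ℂ)+a₁*I)*((b₀:ℂ)-b₁*I))/4*v₁) := norm_add_le _ _
      _ = d/4 * norm v₀ + d/4 * norm v₁ := by
          rw [norm_mul, norm_mul, norm_div, norm_div, e3, e4]; norm_num
      _ = d/4 * (norm v₀ + norm v₁) := by ring
  exact real_sqrt_bound d t (norm v₀) (norm v₁) (norm w₀) (norm w₁)
    hd0 ht hdt (norm_nonneg _) (norm_nonneg _) (norm_nonneg _)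
    (norm_nonneg _) bw₀ bw₁

theorem PiMat_angle_bound :
    ∃ C > (0 : ℝ), ∀ (z : EuclideanSpace ℂ (Fin 2)) (ξ₁ ξ₂ : EuclideanSpace ℝ (Fin 2)),
      ξ₁ ≠ 0 → ξ₂ ≠ 0 →
      ‖(WithLp.equiv 2 (Fin 2 → ℂ)).symm ((PiMat ξ₁ * PiMat (-ξ₂)).mulVec
          ((WithLp.equiv 2 (Fin 2 → ℂ)) z))‖ ≤
        C * ‖z‖ * InnerProductGeometry.angle ξ₁ ξ₂ := by
  refine ⟨1, one_pos, ?_⟩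
  intro z ξ₁ ξ₂ h₁ h₂
  have r₁pos : (0:ℝ) < ‖ξ₁‖ := norm_pos_iff.mpr h₁
  have r₂pos : (0:ℝ) < ‖ξ₂‖ := norm_pos_iff.mpr h₂
  set θ := InnerProductGeometry.angle ξ₁ ξ₂ with hθdef
  have hθ0 : 0 ≤ θ := InnerProductGeometry.angle_nonneg _ _
  set w := (PiMat ξ₁ * PiMat (-ξ₂)).mulVec ((WithLp.equiv 2 (Fin 2 → ℂ)) z) with hwdef
  -- component formulas
  have hw₀ : w 0
      = (1 - ((((ξ₁ 0 :ℝ):ℂ)*((‖ξ₁‖:ℝ):ℂ)⁻¹) - (((ξ₁ 1 :ℝ):ℂ)*((‖ξ₁‖:ℝ):ℂ)⁻¹)*Complex.I)*((((ξ₂ 0 :ℝ):ℂ)*((‖ξ₂‖:ℝ):ℂ)⁻¹) + (((ξ₂ 1 :ℝ):ℂ)*((‖ξ₂‖:ℝ):ℂ)⁻¹)*Complex.I))/4*(z 0)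
        + (((((ξ₁ 0 :ℝ):ℂ)*((‖ξ₁‖:ℝ):ℂ)⁻¹) - (((ξ₁ 1 :ℝ):ℂ)*((‖ξ₁‖:ℝ):ℂ)⁻¹)*Complex.I) - ((((ξ₂ 0 :ℝ):ℂ)*((‖ξ₂‖:ℝ):ℂ)⁻¹) - (((ξ₂ 1 :ℝ):ℂ)*((‖ξ₂‖:ℝ):ℂ)⁻¹)*Complex.I))/4*(z 1) := by
    rw [hwdef]
    simp [PiMat, Matrix.mulVec, Matrix.mul_apply, dotProduct, Fin.sum_univ_two,
      sigma1, sigma2, Matrix.one_apply, PiLp.neg_apply, norm_neg]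
    ring
  have hw₁ : w 1
      = (((((ξ₁ 0 :ℝ):ℂ)*((‖ξ₁‖:ℝ):ℂ)⁻¹) + (((ξ₁ 1 :ℝ):ℂ)*((‖ξ₁‖:ℝ):ℂ)⁻¹)*Complex.I) - ((((ξ₂ 0 :ℝ):ℂ)*((‖ξ₂‖:ℝ):ℂ)⁻¹) + (((ξ₂ 1 :ℝ):ℂ)*((‖ξ₂‖:ℝ):ℂ)⁻¹)*Complex.I))/4*(z 0)
        + (1 - ((((ξ₁ 0 :ℝ):ℂ)*((‖ξ₁‖:ℝ):ℂ)⁻¹) + (((ξ₁ 1 :ℝ):ℂ)*((‖ξ₁‖:ℝ):ℂ)⁻¹)*Complex.I)*((((ξ₂ 0 :ℝ):ℂ)*((‖ξ₂‖:ℝ):ℂ)⁻¹) - (((ξ₂ 1 :ℝ):ℂ)*((‖ξ₂‖:ℝ):ℂ)⁻¹)*Complex.I))/4*(z 1) := by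
    rw [hwdef]
    simp [PiMat, Matrix.mulVec, Matrix.mul_apply, dotProduct, Fin.sum_univ_two,
      sigma1, sigma2, Matrix.one_apply, PiLp.neg_apply, norm_neg]
    ring
  -- unit vector facts
  have hn1 : ‖ξ₁‖^2 = (ξ₁ 0)^2 + (ξ₁ 1)^2 := by
    rw [EuclideanSpace.norm_eq, Real.sq_sqrt (by positivity)]
    simp [Fin.sum_univ_two, Real.norm_eq_abs, sq_abs]
  have hn2 : ‖ξ₂‖^2 = (ξ₂ 0)^2 + (ξ₂ 1)^2 := by
    rw [EuclideanSpace.norm_eq, Real.sq_sqrt (by positivity)]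
    simp [Fin.sum_univ_two, Real.norm_eq_abs, sq_abs]
  have ha : (ξ₁ 0 / ‖ξ₁‖)^2 + (ξ₁ 1 / ‖ξ₁‖)^2 = 1 := by
    field_simp; linarith [hn1]
  have hb : (ξ₂ 0 / ‖ξ₂‖)^2 + (ξ₂ 1 / ‖ξ₂‖)^2 = 1 := by
    field_simp; linarith [hn2]
  -- cosine
  have hcos : Real.cos θ = (ξ₁ 0 / ‖ξ₁‖) * (ξ₂ 0 / ‖ξ₂‖) + (ξ₁ 1 / ‖ξ₁‖) * (ξ₂ 1 / ‖ξ₂‖) := by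
    rw [hθdef, InnerProductGeometry.cos_angle]
    rw [show (inner ℝ ξ₁ ξ₂ : ℝ) = ξ₁ 0 * ξ₂ 0 + ξ₁ 1 * ξ₂ 1 by
      simp [PiLp.inner_apply, Fin.sum_univ_two, RCLike.inner_apply]; ring]
    field_simp
  have hc : 2 - 2*((ξ₁ 0 / ‖ξ₁‖) * (ξ₂ 0 / ‖ξ₂‖) + (ξ₁ 1 / ‖ξ₁‖) * (ξ₂ 1 / ‖ξ₂‖)) ≤ θ^2 := by
    have := Real.one_sub_sq_div_two_le_cos (x := θ)
    rw [hcos] at this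
    linarith
  -- norms
  have hnw : ‖(WithLp.equiv 2 (Fin 2 → ℂ)).symm w‖
      = Real.sqrt (norm (w 0)^2 + norm (w 1)^2) := by
    rw [EuclideanSpace.norm_eq]
    simp [Fin.sum_univ_two, WithLp.equiv_symm_apply]
  have hnz : ‖z‖ = Real.sqrt (norm (z 0)^2 + norm (z 1)^2) := by
    rw [EuclideanSpace.norm_eq]
    simp [Fin.sum_univ_two]
  rw [hnw, hnz, one_mul]
  apply scalar_bound (ξ₁ 0 / ‖ξ₁‖) (ξ₁ 1 / ‖ξ₁‖) (ξ₂ 0 / ‖ξ₂‖) (ξ₂ 1 / ‖ξ₂‖) θ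
    (z 0) (z 1) (w 0) (w 1) ha hb hθ0 hc
  · rw [hw₀]; push_cast; ring
  · rw [hw₁]; push_cast; ring
end

section
/- The operator norm of Π(ξ_1) Π(-ξ_2) is bounded by the angle: for all nonzero ξ_1, ξ_2 ∈ R^2, ‖Π(ξ_1)Π(-ξ_2)‖_{op} ≤ 2 sin(∠(ξ_1,ξ_2)/2). -/
open Matrix

lemma opnorm_le_two_mul_aux (A : Matrix (Fin 2) (Fin 2) ℂ) (c : ℝ) (hc : 0 ≤ c)
    (h : ∀ i j, ‖A i j‖ ≤ c) :
    ‖LinearMap.toContinuousLinearMap (Matrix.toEuclideanLin A)‖ ≤ 2 * c := by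
  apply ContinuousLinearMap.opNorm_le_bound _ (by positivity)
  intro x
  have happ : ∀ i, (Matrix.toEuclideanLin A x) i = A i 0 * x 0 + A i 1 * x 1 := by
    intro i
    simp [Matrix.toEuclideanLin_apply, Matrix.mulVec, dotProduct, Fin.sum_univ_two]
    fin_cases i <;> rfl
  have hx : ‖x‖ ^ 2 = ‖x 0‖ ^ 2 + ‖x 1‖ ^ 2 := by
    rw [EuclideanSpace.norm_eq, Real.sq_sqrt (by positivity), Fin.sum_univ_two]
  have hy : ∀ i, ‖(Matrix.toEuclideanLin A x) i‖ ≤ c * ‖x 0‖ + c * ‖x 1‖ := by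
    intro i
    rw [happ i]
    calc ‖A i 0 * x 0 + A i 1 * x 1‖ ≤ ‖A i 0 * x 0‖ + ‖A i 1 * x 1‖ := norm_add_le _ _
    _ ≤ c * ‖x 0‖ + c * ‖x 1‖ := by
        rw [norm_mul, norm_mul]
        gcongr <;> [exact h i 0; exact h i 1]
  rw [EuclideanSpace.norm_eq, Fin.sum_univ_two,
    show 2 * c * ‖x‖ = Real.sqrt ((2 * c * ‖x‖) ^ 2) by rw [Real.sqrt_sq (by positivity)]]
  apply Real.sqrt_le_sqrt
  simp only [LinearMap.coe_toContinuousLinearMap']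
  have h0 := hy 0
  have h1 := hy 1
  have hn0 : (0:ℝ) ≤ ‖(Matrix.toEuclideanLin A x) 0‖ := norm_nonneg _
  have hn1 : (0:ℝ) ≤ ‖(Matrix.toEuclideanLin A x) 1‖ := norm_nonneg _
  have hrhs : (2 * c * ‖x‖) ^ 2 = 4 * c ^ 2 * (‖x 0‖ ^ 2 + ‖x 1‖ ^ 2) := by
    rw [mul_pow, mul_pow, hx]; ring
  rw [hrhs]
  nlinarith [sq_nonneg (c * ‖x 0‖ - c * ‖x 1‖), h0, h1, hn0, hn1,
    mul_nonneg (mul_nonneg hc (norm_nonneg (x 0))) (norm_nonneg (x 1))]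

lemma norm_ofReal_add_mul_I_le_aux (A B c : ℝ) (hc : 0 ≤ c) (h : A ^ 2 + B ^ 2 ≤ c ^ 2) :
    ‖((A : ℂ) + (B : ℂ) * Complex.I)‖ ≤ c := by
  rw [Complex.norm_def, Complex.normSq_add_mul_I,
    show c = Real.sqrt (c ^ 2) by rw [Real.sqrt_sq hc]]
  exact Real.sqrt_le_sqrt h

lemma diag_bound_aux (a b p q s : ℝ) (ha : a ^ 2 + b ^ 2 = 1) (hp : p ^ 2 + q ^ 2 = 1)
    (hs : s ^ 2 = (1 - (a * p + b * q)) / 2) :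
    ((1 - (a * p + b * q)) / 4) ^ 2 + ((b * p - a * q) / 4) ^ 2 ≤ (s / 2) ^ 2 := by
  have h1 : (a * p + b * q) ^ 2 + (b * p - a * q) ^ 2 = 1 := by
    linear_combination (p ^ 2 + q ^ 2) * ha + hp
  nlinarith [h1, hs]

lemma off_bound_aux (a b p q s : ℝ) (ha : a ^ 2 + b ^ 2 = 1) (hp : p ^ 2 + q ^ 2 = 1)
    (hs : s ^ 2 = (1 - (a * p + b * q)) / 2) :
    ((a - p) / 4) ^ 2 + ((q - b) / 4) ^ 2 ≤ (s / 2) ^ 2 := by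
  nlinarith [ha, hp, hs]

set_option maxHeartbeats 1600000 in
theorem PiMat_opNorm_bound (ξ₁ ξ₂ : EuclideanSpace ℝ (Fin 2)) (h₁ : ξ₁ ≠ 0) (h₂ : ξ₂ ≠ 0) :
    ‖(LinearMap.toContinuousLinearMap (Matrix.toEuclideanLin (PiMat ξ₁ * PiMat (-ξ₂))))‖ ≤
      2 * Real.sin (InnerProductGeometry.angle ξ₁ ξ₂ / 2) := by
  have hn₁ : (0:ℝ) < ‖ξ₁‖ := norm_pos_iff.mpr h₁
  have hn₂ : (0:ℝ) < ‖ξ₂‖ := norm_pos_iff.mpr h₂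
  have hc₁ : ((‖ξ₁‖ : ℂ)) ≠ 0 := Complex.ofReal_ne_zero.mpr hn₁.ne'
  have hc₂ : ((‖ξ₂‖ : ℂ)) ≠ 0 := Complex.ofReal_ne_zero.mpr hn₂.ne'
  set θ := InnerProductGeometry.angle ξ₁ ξ₂ with hθdef
  set s := Real.sin (θ / 2) with hsdef
  have hθ0 : 0 ≤ θ := InnerProductGeometry.angle_nonneg _ _
  have hθpi : θ ≤ Real.pi := InnerProductGeometry.angle_le_pi _ _
  have hs0 : 0 ≤ s := Real.sin_nonneg_of_nonneg_of_le_pi (by linarith)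
    (by linarith [Real.pi_pos])
  set a := ξ₁ 0 / ‖ξ₁‖ with hA
  set b := ξ₁ 1 / ‖ξ₁‖ with hB
  set p := ξ₂ 0 / ‖ξ₂‖ with hP
  set q := ξ₂ 1 / ‖ξ₂‖ with hQ
  have hnorm1 : ‖ξ₁‖ ^ 2 = (ξ₁ 0) ^ 2 + (ξ₁ 1) ^ 2 := by
    rw [EuclideanSpace.norm_eq, Real.sq_sqrt (by positivity), Fin.sum_univ_two]
    simp [Real.norm_eq_abs, sq_abs]
  have hnorm2 : ‖ξ₂‖ ^ 2 = (ξ₂ 0) ^ 2 + (ξ₂ 1) ^ 2 := by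
    rw [EuclideanSpace.norm_eq, Real.sq_sqrt (by positivity), Fin.sum_univ_two]
    simp [Real.norm_eq_abs, sq_abs]
  have ha : a ^ 2 + b ^ 2 = 1 := by
    rw [hA, hB]; field_simp; linarith [hnorm1]
  have hp : p ^ 2 + q ^ 2 = 1 := by
    rw [hP, hQ]; field_simp; linarith [hnorm2]
  have hcos : Real.cos θ = a * p + b * q := by
    rw [hθdef, InnerProductGeometry.cos_angle, hA, hB, hP, hQ]
    have hinner : (inner ℝ ξ₁ ξ₂ : ℝ) = ξ₁ 0 * ξ₂ 0 + ξ₁ 1 * ξ₂ 1 := by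
      simp [PiLp.inner_apply, Fin.sum_univ_two, RCLike.inner_apply, mul_comm]
    rw [hinner]
    field_simp
    try ring
  have hs2 : s ^ 2 = (1 - (a * p + b * q)) / 2 := by
    rw [hsdef, Real.sin_half_eq_sqrt (by linarith) (by linarith [Real.pi_pos]),
      Real.sq_sqrt (by linarith [Real.cos_le_one θ]), hcos]
  have e00 : (PiMat ξ₁ * PiMat (-ξ₂)) 0 0 =
      (((1 - (a * p + b * q)) / 4 : ℝ) : ℂ) + (((b * p - a * q) / 4 : ℝ) : ℂ) * Complex.I := by
    rw [hA, hB, hP, hQ]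
    simp only [PiMat, sigma1, sigma2, Matrix.mul_apply, Fin.sum_univ_two, Matrix.smul_apply,
      Matrix.add_apply, Matrix.one_apply, Matrix.cons_val', Matrix.cons_val_zero,
      Matrix.cons_val_one, Matrix.head_cons, Matrix.head_fin_const, Matrix.empty_val',
      Matrix.cons_val_fin_one, smul_eq_mul, norm_neg, PiLp.neg_apply, Matrix.of_apply]
    push_cast
    field_simp
    ring_nf
    try simp only [Complex.I_sq]
    try ring
  have e01 : (PiMat ξ₁ * PiMat (-ξ₂)) 0 1 =
      (((a - p) / 4 : ℝ) : ℂ) + (((q - b) / 4 : ℝ) : ℂ) * Complex.I := by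
    rw [hA, hB, hP, hQ]
    simp only [PiMat, sigma1, sigma2, Matrix.mul_apply, Fin.sum_univ_two, Matrix.smul_apply,
      Matrix.add_apply, Matrix.one_apply, Matrix.cons_val', Matrix.cons_val_zero,
      Matrix.cons_val_one, Matrix.head_cons, Matrix.head_fin_const, Matrix.empty_val',
      Matrix.cons_val_fin_one, smul_eq_mul, norm_neg, PiLp.neg_apply, Matrix.of_apply]
    push_cast
    field_simp
    ring_nf
    try simp only [Complex.I_sq]
    try ring
  have e10 : (PiMat ξ₁ * PiMat (-ξ₂)) 1 0 =
      (((a - p) / 4 : ℝ) : ℂ) + (((b - q) / 4 : ℝ) : ℂ) * Complex.I := by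
    rw [hA, hB, hP, hQ]
    simp only [PiMat, sigma1, sigma2, Matrix.mul_apply, Fin.sum_univ_two, Matrix.smul_apply,
      Matrix.add_apply, Matrix.one_apply, Matrix.cons_val', Matrix.cons_val_zero,
      Matrix.cons_val_one, Matrix.head_cons, Matrix.head_fin_const, Matrix.empty_val',
      Matrix.cons_val_fin_one, smul_eq_mul, norm_neg, PiLp.neg_apply, Matrix.of_apply]
    push_cast
    field_simp
    ring_nf
    try simp only [Complex.I_sq]
    try ring
  have e11 : (PiMat ξ₁ * PiMat (-ξ₂)) 1 1 =
      (((1 - (a * p + b * q)) / 4 : ℝ) : ℂ) + (((a * q - b * p) / 4 : ℝ) : ℂ) * Complex.I := by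
    rw [hA, hB, hP, hQ]
    simp only [PiMat, sigma1, sigma2, Matrix.mul_apply, Fin.sum_univ_two, Matrix.smul_apply,
      Matrix.add_apply, Matrix.one_apply, Matrix.cons_val', Matrix.cons_val_zero,
      Matrix.cons_val_one, Matrix.head_cons, Matrix.head_fin_const, Matrix.empty_val',
      Matrix.cons_val_fin_one, smul_eq_mul, norm_neg, PiLp.neg_apply, Matrix.of_apply]
    push_cast
    field_simp
    ring_nf
    try simp only [Complex.I_sq]
    try ring
  have hent : ∀ i j, ‖(PiMat ξ₁ * PiMat (-ξ₂)) i j‖ ≤ s / 2 := by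
    intro i j
    fin_cases i <;> fin_cases j <;> simp only [Fin.zero_eta, Fin.mk_one]
    · rw [e00]
      exact norm_ofReal_add_mul_I_le_aux _ _ _ (by linarith) (diag_bound_aux a b p q s ha hp hs2)
    · rw [e01]
      exact norm_ofReal_add_mul_I_le_aux _ _ _ (by linarith) (off_bound_aux a b p q s ha hp hs2)
    · rw [e10]
      apply norm_ofReal_add_mul_I_le_aux _ _ _ (by linarith)
      have h' : ((b - q) / 4) ^ 2 = ((q - b) / 4) ^ 2 := by ring
      rw [h']
      exact off_bound_aux a b p q s ha hp hs2
    · rw [e11]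
      apply norm_ofReal_add_mul_I_le_aux _ _ _ (by linarith)
      have h' : ((a * q - b * p) / 4) ^ 2 = ((b * p - a * q) / 4) ^ 2 := by ring
      rw [h']
      exact diag_bound_aux a b p q s ha hp hs2
  calc ‖(LinearMap.toContinuousLinearMap (Matrix.toEuclideanLin (PiMat ξ₁ * PiMat (-ξ₂))))‖
      ≤ 2 * (s / 2) := opnorm_le_two_mul_aux _ _ (by linarith) hent
    _ = s := by ring
    _ ≤ 2 * s := by linarith
end
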